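/- For the normalized Haar measure μ on U_n (n ≥ 1), ∫ |u_{11}|⁴ dμ(U) = 2/(n(n+1)). -/

import Mathlib

open MeasureTheory Matrix

noncomputable instance unitaryGroupMeasurableSpace (n : ℕ) :
    MeasurableSpace (Matrix.unitaryGroup (Fin n) ℂ) := borel _

namespace HaarFourthAux

instance (n : ℕ) : BorelSpace (Matrix.unitaryGroup (Fin n) ℂ) := ⟨rfl⟩

variable {n : ℕ}

lemma continuous_entry (i j : Fin n) :
    Continuous fun U : Matrix.unitaryGroup (Fin n) ℂ => (U : Matrix (Fin n) (Fin n) ℂ) i j :=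
  continuous_subtype_val.matrix_elem i j

lemma entry_bound (U : Matrix.unitaryGroup (Fin n) ℂ) (i j : Fin n) :
    ‖(U : Matrix (Fin n) (Fin n) ℂ) i j‖ ≤ 1 :=
  entry_norm_bound_of_unitary U.2 i j

lemma integrable_bounded (μ : Measure (Matrix.unitaryGroup (Fin n) ℂ)) [IsProbabilityMeasure μ]
    (g : Matrix.unitaryGroup (Fin n) ℂ → ℝ) (hg : Continuous g) (C : ℝ)
    (hC : ∀ U, ‖g U‖ ≤ C) : Integrable g μ :=
  (integrable_const C).mono' hg.aestronglyMeasurable (Filter.Eventually.of_forall hC)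

lemma integral_smul_eq (μ : Measure (Matrix.unitaryGroup (Fin n) ℂ)) [IsProbabilityMeasure μ]
    (hinv : ∀ V : Matrix.unitaryGroup (Fin n) ℂ, μ.map (fun U => V * U) = μ)
    (g : Matrix.unitaryGroup (Fin n) ℂ → ℝ) (hg : Continuous g)
    (V : Matrix.unitaryGroup (Fin n) ℂ) :
    ∫ U, g (V * U) ∂μ = ∫ U, g U ∂μ := by
  conv_rhs => rw [← hinv V]
  rw [integral_map ((continuous_mul_left V).measurable.aemeasurable) hg.aestronglyMeasurable]

lemma exists_unitary_row (hn : 0 < n) (w : Fin n → ℂ)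
    (hw : ∑ m, ‖w m‖ ^ 2 = 1) :
    ∃ V : Matrix.unitaryGroup (Fin n) ℂ,
      ∀ m, (V : Matrix (Fin n) (Fin n) ℂ) ⟨0, hn⟩ m = w m := by
  classical
  set i0 : Fin n := ⟨0, hn⟩
  let w' : EuclideanSpace ℂ (Fin n) := WithLp.toLp 2 w
  have hw' : ‖w'‖ = 1 := by
    rw [EuclideanSpace.norm_eq, show (1:ℝ) = Real.sqrt 1 from (Real.sqrt_one).symm]
    exact congrArg Real.sqrt (by simpa [w'] using hw)
  have horth : Orthonormal ℂ (({i0} : Set (Fin n)).restrict (fun _ : Fin n => w')) := by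
    constructor
    · intro i; exact hw'
    · intro i j hij; exact absurd (Subsingleton.elim i j) hij
  obtain ⟨b, hb⟩ := horth.exists_orthonormalBasis_extension_of_card_eq
    (by simp [finrank_euclideanSpace_fin])
  have hb0 : b i0 = w' := hb i0 (Set.mem_singleton _)
  let M : Matrix (Fin n) (Fin n) ℂ := Matrix.of fun p q => b p q
  have hM : M ∈ Matrix.unitaryGroup (Fin n) ℂ := by
    rw [Matrix.mem_unitaryGroup_iff]
    ext p q
    have h2 := (orthonormal_iff_ite.mp b.orthonormal) q p
    rw [PiLp.inner_apply] at h2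
    simp only [RCLike.inner_apply] at h2
    simp only [Matrix.mul_apply, Matrix.star_apply, Matrix.one_apply, M, Matrix.of_apply]
    rw [show (∑ x, (b p).ofLp x * star ((b q).ofLp x)) = ∑ x, (b p).ofLp x * (starRingEnd ℂ) ((b q).ofLp x) from Finset.sum_congr rfl fun x _ => by rw [Complex.star_def], h2]
    by_cases h : p = q
    · simp [h]
    · rw [if_neg h, if_neg (fun hh => h hh.symm)]
  exact ⟨⟨M, hM⟩, fun m => by simpa [M, w'] using congrArg (fun v : EuclideanSpace ℂ (Fin n) => v m) hb0⟩

lemma key (hn : 0 < n) (μ : Measure (Matrix.unitaryGroup (Fin n) ℂ)) [IsProbabilityMeasure μ]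
    (hinv : ∀ V : Matrix.unitaryGroup (Fin n) ℂ, μ.map (fun U => V * U) = μ)
    (w : Fin n → ℂ) (hw : ∑ m, ‖w m‖ ^ 2 = 1) :
    ∫ U : Matrix.unitaryGroup (Fin n) ℂ,
        ‖∑ m, w m * (U : Matrix (Fin n) (Fin n) ℂ) m ⟨0, hn⟩‖ ^ 4 ∂μ
      = ∫ U : Matrix.unitaryGroup (Fin n) ℂ,
        ‖(U : Matrix (Fin n) (Fin n) ℂ) ⟨0, hn⟩ ⟨0, hn⟩‖ ^ 4 ∂μ := by
  obtain ⟨V, hV⟩ := exists_unitary_row hn w hw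
  set i0 : Fin n := ⟨0, hn⟩
  have hg : Continuous fun U : Matrix.unitaryGroup (Fin n) ℂ =>
      ‖(U : Matrix (Fin n) (Fin n) ℂ) i0 i0‖ ^ 4 :=
    (continuous_norm.comp (continuous_entry i0 i0)).pow 4
  rw [← integral_smul_eq μ hinv _ hg V]
  refine integral_congr_ae (Filter.Eventually.of_forall fun U => ?_)
  have hcoe : ((V * U : Matrix.unitaryGroup (Fin n) ℂ) : Matrix (Fin n) (Fin n) ℂ) i0 i0
      = ∑ m, w m * (U : Matrix (Fin n) (Fin n) ℂ) m i0 := by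
    show ((V : Matrix (Fin n) (Fin n) ℂ) * (U : Matrix (Fin n) (Fin n) ℂ)) i0 i0 = _
    rw [Matrix.mul_apply]
    exact Finset.sum_congr rfl fun m _ => by rw [hV m]
  simp only [hcoe]

lemma moment_single (hn : 0 < n) (μ : Measure (Matrix.unitaryGroup (Fin n) ℂ))
    [IsProbabilityMeasure μ]
    (hinv : ∀ V : Matrix.unitaryGroup (Fin n) ℂ, μ.map (fun U => V * U) = μ) (j : Fin n) :
    ∫ U : Matrix.unitaryGroup (Fin n) ℂ,
        ‖(U : Matrix (Fin n) (Fin n) ℂ) j ⟨0, hn⟩‖ ^ 4 ∂μ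
      = ∫ U : Matrix.unitaryGroup (Fin n) ℂ,
        ‖(U : Matrix (Fin n) (Fin n) ℂ) ⟨0, hn⟩ ⟨0, hn⟩‖ ^ 4 ∂μ := by
  classical
  have hw : ∑ m, ‖(fun m => if m = j then (1:ℂ) else 0) m‖ ^ 2 = 1 := by
    rw [Finset.sum_congr rfl fun m _ => by
      show ‖if m = j then (1:ℂ) else 0‖ ^ 2 = if m = j then 1 else 0
      split <;> simp]
    simp
  have h := key hn μ hinv _ hw
  rw [show (fun U : Matrix.unitaryGroup (Fin n) ℂ =>
      ‖∑ m, (if m = j then (1:ℂ) else 0)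
        * (U : Matrix (Fin n) (Fin n) ℂ) m ⟨0, hn⟩‖ ^ 4)
    = fun U : Matrix.unitaryGroup (Fin n) ℂ =>
      ‖(U : Matrix (Fin n) (Fin n) ℂ) j ⟨0, hn⟩‖ ^ 4 from funext fun U => by
        rw [show (∑ m, (if m = j then (1:ℂ) else 0) * (U : Matrix (Fin n) (Fin n) ℂ) m ⟨0, hn⟩)
          = (U : Matrix (Fin n) (Fin n) ℂ) j ⟨0, hn⟩ by
            simp [ite_mul, Finset.sum_ite_eq']]] at h
  exact h

lemma moment_combo (hn : 0 < n) (μ : Measure (Matrix.unitaryGroup (Fin n) ℂ))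
    [IsProbabilityMeasure μ]
    (hinv : ∀ V : Matrix.unitaryGroup (Fin n) ℂ, μ.map (fun U => V * U) = μ)
    (j k : Fin n) (hjk : j ≠ k) (c : ℂ) (hc : ‖c‖ = 1) :
    ∫ U : Matrix.unitaryGroup (Fin n) ℂ,
        ‖(U : Matrix (Fin n) (Fin n) ℂ) j ⟨0, hn⟩
          + c * (U : Matrix (Fin n) (Fin n) ℂ) k ⟨0, hn⟩‖ ^ 4 ∂μ
      = 4 * ∫ U : Matrix.unitaryGroup (Fin n) ℂ,
        ‖(U : Matrix (Fin n) (Fin n) ℂ) ⟨0, hn⟩ ⟨0, hn⟩‖ ^ 4 ∂μ := by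
  classical
  set r : ℂ := ((Real.sqrt 2 : ℝ) : ℂ)⁻¹ with hrdef
  have hr : ‖r‖ ^ 2 = 1/2 := by
    rw [hrdef, norm_inv, Complex.norm_real, Real.norm_eq_abs, abs_of_nonneg (Real.sqrt_nonneg 2)]
    rw [inv_pow, Real.sq_sqrt (by norm_num)]
    norm_num
  have hw : ∑ m, ‖(fun m => if m = j then r else if m = k then r * c else 0) m‖ ^ 2
      = 1 := by
    rw [Finset.sum_congr rfl fun m _ => by
      show ‖if m = j then r else if m = k then r * c else 0‖ ^ 2
        = (if m = j then (1:ℝ)/2 else 0) + (if m = k then 1/2 else 0)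
      by_cases h1 : m = j <;> by_cases h2 : m = k
      · exact absurd (h1 ▸ h2) hjk
      all_goals simp [h1, h2, hjk, Ne.symm hjk, norm_mul, mul_pow, hr, hc]]
    rw [Finset.sum_add_distrib]
    simp [Finset.sum_ite_eq']
    norm_num
  have h := key hn μ hinv _ hw
  have hsum : ∀ U : Matrix.unitaryGroup (Fin n) ℂ,
      (∑ m, (if m = j then r else if m = k then r * c else 0)
        * (U : Matrix (Fin n) (Fin n) ℂ) m ⟨0, hn⟩)
      = r * ((U : Matrix (Fin n) (Fin n) ℂ) j ⟨0, hn⟩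
          + c * (U : Matrix (Fin n) (Fin n) ℂ) k ⟨0, hn⟩) := by
    intro U
    rw [Finset.sum_congr rfl fun m _ => by
      show _ = (if m = j then r * (U : Matrix (Fin n) (Fin n) ℂ) j ⟨0, hn⟩ else 0)
        + (if m = k then r * c * (U : Matrix (Fin n) (Fin n) ℂ) k ⟨0, hn⟩ else 0)
      by_cases h1 : m = j <;> by_cases h2 : m = k
      · exact absurd (h1 ▸ h2) hjk
      all_goals simp [h1, h2, hjk, Ne.symm hjk]]
    rw [Finset.sum_add_distrib]
    simp [Finset.sum_ite_eq']
    ring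
  have habs : ∀ U : Matrix.unitaryGroup (Fin n) ℂ,
      ‖∑ m, (if m = j then r else if m = k then r * c else 0)
        * (U : Matrix (Fin n) (Fin n) ℂ) m ⟨0, hn⟩‖ ^ 4
      = 4⁻¹ * ‖(U : Matrix (Fin n) (Fin n) ℂ) j ⟨0, hn⟩
          + c * (U : Matrix (Fin n) (Fin n) ℂ) k ⟨0, hn⟩‖ ^ 4 := by
    intro U
    rw [hsum U, norm_mul, mul_pow, show (4:ℕ) = 2*2 from rfl, pow_mul, hr]
    norm_num
  rw [show (fun U : Matrix.unitaryGroup (Fin n) ℂ =>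
      ‖∑ m, (if m = j then r else if m = k then r * c else 0)
        * (U : Matrix (Fin n) (Fin n) ℂ) m ⟨0, hn⟩‖ ^ 4)
    = fun U : Matrix.unitaryGroup (Fin n) ℂ =>
      4⁻¹ * ‖(U : Matrix (Fin n) (Fin n) ℂ) j ⟨0, hn⟩
          + c * (U : Matrix (Fin n) (Fin n) ℂ) k ⟨0, hn⟩‖ ^ 4 from funext habs,
    integral_const_mul] at h
  linarith

end HaarFourthAux
section Main
open HaarFourthAux

lemma HaarFourthAux.fourpoint (z w : ℂ) :
    ‖z + 1 * w‖ ^ 4 + ‖z + (-1) * w‖ ^ 4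
      + ‖z + Complex.I * w‖ ^ 4 + ‖z + (-Complex.I) * w‖ ^ 4
    = 4 * ‖z‖ ^ 4 + 4 * ‖w‖ ^ 4
      + 16 * (‖z‖ ^ 2 * ‖w‖ ^ 2) := by
  have h4 : ∀ y : ℂ, ‖y‖ ^ 4 = (y.re ^ 2 + y.im ^ 2) ^ 2 := fun y => by
    rw [show (4:ℕ) = 2*2 from rfl, pow_mul, Complex.sq_norm, Complex.normSq_apply]; ring
  have h2 : ∀ y : ℂ, ‖y‖ ^ 2 = y.re ^ 2 + y.im ^ 2 := fun y => by
    rw [Complex.sq_norm, Complex.normSq_apply]; ring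
  simp only [h4, h2, Complex.add_re, Complex.add_im, Complex.mul_re, Complex.mul_im,
    Complex.I_re, Complex.I_im, Complex.neg_re, Complex.neg_im, Complex.one_re, Complex.one_im]
  ring

lemma HaarFourthAux.norm_column {n : ℕ} (hn : 0 < n) (U : Matrix.unitaryGroup (Fin n) ℂ) :
    ∑ m, ‖(U : Matrix (Fin n) (Fin n) ℂ) m ⟨0, hn⟩‖ ^ 2 = 1 := by
  have h := Matrix.mem_unitaryGroup_iff'.mp U.2
  have h1 : ((star (U : Matrix (Fin n) (Fin n) ℂ) * (U : Matrix (Fin n) (Fin n) ℂ))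
      ⟨0, hn⟩ ⟨0, hn⟩ : ℂ) = 1 := by rw [h]; simp [Matrix.one_apply]
  rw [Matrix.mul_apply] at h1
  rw [Finset.sum_congr rfl fun m _ => show (star (U : Matrix (Fin n) (Fin n) ℂ)) ⟨0, hn⟩ m
      * (U : Matrix (Fin n) (Fin n) ℂ) m ⟨0, hn⟩
      = ((‖(U : Matrix (Fin n) (Fin n) ℂ) m ⟨0, hn⟩‖ ^ 2 : ℝ) : ℂ) by
    rw [Matrix.star_apply, Complex.star_def, Complex.sq_norm,
      Complex.normSq_eq_conj_mul_self]] at h1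
  exact_mod_cast h1

/-- For the normalized Haar measure `μ` on `U_n` (`n ≥ 1`), characterized as a
left-translation invariant probability measure, `∫ |u₁₁|⁴ dμ(U) = 2/(n(n+1))`. -/
theorem haar_integral_abs_fourth_entry
    (n : ℕ) (hn : 0 < n) (μ : Measure (Matrix.unitaryGroup (Fin n) ℂ))
    [IsProbabilityMeasure μ]
    (hinv : ∀ V : Matrix.unitaryGroup (Fin n) ℂ, μ.map (fun U => V * U) = μ) :
    (∫ U : Matrix.unitaryGroup (Fin n) ℂ,
        ‖(U : Matrix (Fin n) (Fin n) ℂ) ⟨0, hn⟩ ⟨0, hn⟩‖ ^ 4 ∂μ) =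
      2 / (n * (n + 1)) := by
  classical
  set a : ℝ := ∫ U : Matrix.unitaryGroup (Fin n) ℂ,
      ‖(U : Matrix (Fin n) (Fin n) ℂ) ⟨0, hn⟩ ⟨0, hn⟩‖ ^ 4 ∂μ with ha
  -- integrability of the basic integrands
  have cont2 : ∀ j k : Fin n, Continuous fun U : Matrix.unitaryGroup (Fin n) ℂ =>
      ‖(U : Matrix (Fin n) (Fin n) ℂ) j ⟨0, hn⟩‖ ^ 2
        * ‖(U : Matrix (Fin n) (Fin n) ℂ) k ⟨0, hn⟩‖ ^ 2 := fun j k =>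
    ((continuous_norm.comp (continuous_entry j ⟨0, hn⟩)).pow 2).mul
      ((continuous_norm.comp (continuous_entry k ⟨0, hn⟩)).pow 2)
  have int2 : ∀ j k : Fin n, Integrable (fun U : Matrix.unitaryGroup (Fin n) ℂ =>
      ‖(U : Matrix (Fin n) (Fin n) ℂ) j ⟨0, hn⟩‖ ^ 2
        * ‖(U : Matrix (Fin n) (Fin n) ℂ) k ⟨0, hn⟩‖ ^ 2) μ := by
    intro j k
    refine integrable_bounded μ _ (cont2 j k) 1 fun U => ?_
    rw [Real.norm_eq_abs, abs_of_nonneg (by positivity)]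
    exact mul_le_one₀ (pow_le_one₀ (by positivity) (entry_bound U j ⟨0, hn⟩))
      (by positivity) (pow_le_one₀ (by positivity) (entry_bound U k ⟨0, hn⟩))
  have int4 : ∀ j : Fin n, Integrable (fun U : Matrix.unitaryGroup (Fin n) ℂ =>
      ‖(U : Matrix (Fin n) (Fin n) ℂ) j ⟨0, hn⟩‖ ^ 4) μ := by
    intro j
    refine integrable_bounded μ _
      ((continuous_norm.comp (continuous_entry j ⟨0, hn⟩)).pow 4) 1 fun U => ?_
    rw [Real.norm_eq_abs, abs_of_nonneg (by positivity)]
    exact pow_le_one₀ (by positivity) (entry_bound U j ⟨0, hn⟩)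
  have intc : ∀ (j k : Fin n) (c : ℂ), ‖c‖ = 1 →
      Integrable (fun U : Matrix.unitaryGroup (Fin n) ℂ =>
        ‖(U : Matrix (Fin n) (Fin n) ℂ) j ⟨0, hn⟩
          + c * (U : Matrix (Fin n) (Fin n) ℂ) k ⟨0, hn⟩‖ ^ 4) μ := by
    intro j k c hc
    refine integrable_bounded μ _
      ((continuous_norm.comp ((continuous_entry j ⟨0, hn⟩).add
        (continuous_const.mul (continuous_entry k ⟨0, hn⟩)))).pow 4) 16 fun U => ?_
    rw [Real.norm_eq_abs, abs_of_nonneg (by positivity)]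
    have hb : ‖(U : Matrix (Fin n) (Fin n) ℂ) j ⟨0, hn⟩
        + c * (U : Matrix (Fin n) (Fin n) ℂ) k ⟨0, hn⟩‖ ≤ 2 := by
      refine le_trans (norm_add_le _ _) ?_
      rw [norm_mul, hc, one_mul]
      linarith [entry_bound U j ⟨0, hn⟩, entry_bound U k ⟨0, hn⟩]
    calc ‖_‖ ^ 4 ≤ 2 ^ 4 := pow_le_pow_left₀ (by positivity) hb 4
    _ = 16 := by norm_num
  -- off-diagonal second moments
  have hoff : ∀ j k : Fin n, j ≠ k →
      (∫ U : Matrix.unitaryGroup (Fin n) ℂ,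
        ‖(U : Matrix (Fin n) (Fin n) ℂ) j ⟨0, hn⟩‖ ^ 2
          * ‖(U : Matrix (Fin n) (Fin n) ℂ) k ⟨0, hn⟩‖ ^ 2 ∂μ) = a / 2 := by
    intro j k hjk
    have h1 := moment_combo hn μ hinv j k hjk 1 (by simp)
    have h2 := moment_combo hn μ hinv j k hjk (-1) (by simp)
    have h3 := moment_combo hn μ hinv j k hjk Complex.I (by simp)
    have h4 := moment_combo hn μ hinv j k hjk (-Complex.I) (by simp)
    have i1 := intc j k 1 (by simp)
    have i2 := intc j k (-1) (by simp)
    have i3 := intc j k Complex.I (by simp)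
    have i4 := intc j k (-Complex.I) (by simp)
    have hsplit : (∫ U : Matrix.unitaryGroup (Fin n) ℂ,
        (‖(U : Matrix (Fin n) (Fin n) ℂ) j ⟨0, hn⟩
            + 1 * (U : Matrix (Fin n) (Fin n) ℂ) k ⟨0, hn⟩‖ ^ 4
          + ‖(U : Matrix (Fin n) (Fin n) ℂ) j ⟨0, hn⟩
            + (-1) * (U : Matrix (Fin n) (Fin n) ℂ) k ⟨0, hn⟩‖ ^ 4
          + ‖(U : Matrix (Fin n) (Fin n) ℂ) j ⟨0, hn⟩
            + Complex.I * (U : Matrix (Fin n) (Fin n) ℂ) k ⟨0, hn⟩‖ ^ 4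
          + ‖(U : Matrix (Fin n) (Fin n) ℂ) j ⟨0, hn⟩
            + (-Complex.I) * (U : Matrix (Fin n) (Fin n) ℂ) k ⟨0, hn⟩‖ ^ 4) ∂μ)
        = 16 * a := by
      have i12 : Integrable (fun U : Matrix.unitaryGroup (Fin n) ℂ =>
          ‖(U : Matrix (Fin n) (Fin n) ℂ) j ⟨0, hn⟩
            + 1 * (U : Matrix (Fin n) (Fin n) ℂ) k ⟨0, hn⟩‖ ^ 4
          + ‖(U : Matrix (Fin n) (Fin n) ℂ) j ⟨0, hn⟩
            + (-1) * (U : Matrix (Fin n) (Fin n) ℂ) k ⟨0, hn⟩‖ ^ 4) μ := i1.add i2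
      have i123 : Integrable (fun U : Matrix.unitaryGroup (Fin n) ℂ =>
          ‖(U : Matrix (Fin n) (Fin n) ℂ) j ⟨0, hn⟩
            + 1 * (U : Matrix (Fin n) (Fin n) ℂ) k ⟨0, hn⟩‖ ^ 4
          + ‖(U : Matrix (Fin n) (Fin n) ℂ) j ⟨0, hn⟩
            + (-1) * (U : Matrix (Fin n) (Fin n) ℂ) k ⟨0, hn⟩‖ ^ 4
          + ‖(U : Matrix (Fin n) (Fin n) ℂ) j ⟨0, hn⟩
            + Complex.I * (U : Matrix (Fin n) (Fin n) ℂ) k ⟨0, hn⟩‖ ^ 4) μ := i12.add i3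
      rw [integral_add i123 i4, integral_add i12 i3,
        integral_add i1 i2, h1, h2, h3, h4]
      ring
    rw [show (fun U : Matrix.unitaryGroup (Fin n) ℂ =>
        ‖(U : Matrix (Fin n) (Fin n) ℂ) j ⟨0, hn⟩
            + 1 * (U : Matrix (Fin n) (Fin n) ℂ) k ⟨0, hn⟩‖ ^ 4
          + ‖(U : Matrix (Fin n) (Fin n) ℂ) j ⟨0, hn⟩
            + (-1) * (U : Matrix (Fin n) (Fin n) ℂ) k ⟨0, hn⟩‖ ^ 4
          + ‖(U : Matrix (Fin n) (Fin n) ℂ) j ⟨0, hn⟩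
            + Complex.I * (U : Matrix (Fin n) (Fin n) ℂ) k ⟨0, hn⟩‖ ^ 4
          + ‖(U : Matrix (Fin n) (Fin n) ℂ) j ⟨0, hn⟩
            + (-Complex.I) * (U : Matrix (Fin n) (Fin n) ℂ) k ⟨0, hn⟩‖ ^ 4)
      = fun U : Matrix.unitaryGroup (Fin n) ℂ =>
        4 * ‖(U : Matrix (Fin n) (Fin n) ℂ) j ⟨0, hn⟩‖ ^ 4
          + 4 * ‖(U : Matrix (Fin n) (Fin n) ℂ) k ⟨0, hn⟩‖ ^ 4
          + 16 * (‖(U : Matrix (Fin n) (Fin n) ℂ) j ⟨0, hn⟩‖ ^ 2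
            * ‖(U : Matrix (Fin n) (Fin n) ℂ) k ⟨0, hn⟩‖ ^ 2)
      from funext fun U => fourpoint _ _] at hsplit
    have j1 : Integrable (fun U : Matrix.unitaryGroup (Fin n) ℂ =>
        4 * ‖(U : Matrix (Fin n) (Fin n) ℂ) j ⟨0, hn⟩‖ ^ 4) μ :=
      (int4 j).const_mul 4
    have j2 : Integrable (fun U : Matrix.unitaryGroup (Fin n) ℂ =>
        4 * ‖(U : Matrix (Fin n) (Fin n) ℂ) k ⟨0, hn⟩‖ ^ 4) μ :=
      (int4 k).const_mul 4
    have j12 : Integrable (fun U : Matrix.unitaryGroup (Fin n) ℂ =>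
        4 * ‖(U : Matrix (Fin n) (Fin n) ℂ) j ⟨0, hn⟩‖ ^ 4
          + 4 * ‖(U : Matrix (Fin n) (Fin n) ℂ) k ⟨0, hn⟩‖ ^ 4) μ := j1.add j2
    have j3 : Integrable (fun U : Matrix.unitaryGroup (Fin n) ℂ =>
        16 * (‖(U : Matrix (Fin n) (Fin n) ℂ) j ⟨0, hn⟩‖ ^ 2
          * ‖(U : Matrix (Fin n) (Fin n) ℂ) k ⟨0, hn⟩‖ ^ 2)) μ :=
      (int2 j k).const_mul 16
    rw [integral_add j12 j3, integral_add j1 j2,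
      integral_const_mul, integral_const_mul, integral_const_mul,
      moment_single hn μ hinv j, moment_single hn μ hinv k] at hsplit
    rw [← ha] at hsplit
    linarith
  -- diagonal
  have hdiag : ∀ j : Fin n,
      (∫ U : Matrix.unitaryGroup (Fin n) ℂ,
        ‖(U : Matrix (Fin n) (Fin n) ℂ) j ⟨0, hn⟩‖ ^ 2
          * ‖(U : Matrix (Fin n) (Fin n) ℂ) j ⟨0, hn⟩‖ ^ 2 ∂μ) = a := by
    intro j
    rw [show (fun U : Matrix.unitaryGroup (Fin n) ℂ =>
        ‖(U : Matrix (Fin n) (Fin n) ℂ) j ⟨0, hn⟩‖ ^ 2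
          * ‖(U : Matrix (Fin n) (Fin n) ℂ) j ⟨0, hn⟩‖ ^ 2)
      = fun U : Matrix.unitaryGroup (Fin n) ℂ =>
        ‖(U : Matrix (Fin n) (Fin n) ℂ) j ⟨0, hn⟩‖ ^ 4
      from funext fun U => by ring]
    rw [moment_single hn μ hinv j, ← ha]
  -- total
  have htotal : (∫ U : Matrix.unitaryGroup (Fin n) ℂ,
      (∑ j, ∑ k, ‖(U : Matrix (Fin n) (Fin n) ℂ) j ⟨0, hn⟩‖ ^ 2
        * ‖(U : Matrix (Fin n) (Fin n) ℂ) k ⟨0, hn⟩‖ ^ 2) ∂μ) = 1 := by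
    rw [show (fun U : Matrix.unitaryGroup (Fin n) ℂ =>
        (∑ j, ∑ k, ‖(U : Matrix (Fin n) (Fin n) ℂ) j ⟨0, hn⟩‖ ^ 2
          * ‖(U : Matrix (Fin n) (Fin n) ℂ) k ⟨0, hn⟩‖ ^ 2))
      = fun _ : Matrix.unitaryGroup (Fin n) ℂ => (1:ℝ) from funext fun U => by
        rw [← Finset.sum_mul_sum, norm_column hn U, one_mul]]
    simp
  rw [integral_finset_sum _ (fun j _ => integrable_finset_sum _ fun k _ => int2 j k)] at htotal
  rw [Finset.sum_congr rfl fun j _ => integral_finset_sum Finset.univ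
    fun k _ => int2 j k] at htotal
  rw [Finset.sum_congr rfl fun j (_ : j ∈ Finset.univ) => Finset.sum_congr rfl
    fun k (_ : k ∈ Finset.univ) => show (∫ U : Matrix.unitaryGroup (Fin n) ℂ,
      ‖(U : Matrix (Fin n) (Fin n) ℂ) j ⟨0, hn⟩‖ ^ 2
        * ‖(U : Matrix (Fin n) (Fin n) ℂ) k ⟨0, hn⟩‖ ^ 2 ∂μ)
      = if j = k then a else a / 2 from by
        by_cases h : j = k
        · subst h; rw [if_pos rfl]; exact hdiag j
        · rw [if_neg h]; exact hoff j k h] at htotal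
  rw [Finset.sum_congr rfl fun j (_ : j ∈ Finset.univ) =>
    show (∑ k, if j = k then a else a / 2) = (n:ℝ) * (a/2) + a/2 from by
      rw [Finset.sum_congr rfl fun k (_ : k ∈ Finset.univ) =>
        show (if j = k then a else a / 2) = a/2 + (if j = k then a/2 else 0) from by
          split <;> ring]
      rw [Finset.sum_add_distrib, Finset.sum_const, Finset.sum_ite_eq]
      simp [Finset.card_univ, nsmul_eq_mul]] at htotal
  rw [Finset.sum_const, Finset.card_univ, Fintype.card_fin, nsmul_eq_mul] at htotal
  have hn' : (0:ℝ) < n := by exact_mod_cast hn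
  rw [eq_div_iff (by positivity)]
  linear_combination (2:ℝ) * htotal

end Main
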